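/- Let p be a prime and let G and H be finite noncyclic powerful p-groups. Then σ_P(G × H) ≤ min(σ_P(G), σ_P(H)). -/

import Mathlib

/-- A finite `p`-group `H` is *powerful* if, when `p` is odd, `[H,H]` is contained in the
subgroup generated by `p`-th powers, and when `p = 2`, `[H,H]` is contained in the subgroup
generated by fourth powers. -/
def IsPowerful (p : ℕ) (H : Type*) [Group H] : Prop :=
  commutator H ≤ Subgroup.closure {x : H | ∃ g : H, x = g ^ (if p = 2 then 4 else p)}

/-- A cover of a group by proper subgroups. -/
def IsSubgroupCover {G : Type*} [Group G] (S : Finset (Subgroup G)) : Prop :=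
  (∀ H ∈ S, H ≠ ⊤) ∧ ∀ g : G, ∃ H ∈ S, g ∈ H

/-- The powerful covering number `σ_P(G)`: the least number of subgroups in a cover of `G`
by proper powerful subgroups. -/
noncomputable def powerfulCoveringNumber (p : ℕ) (G : Type*) [Group G] : ℕ :=
  sInf {n : ℕ | ∃ S : Finset (Subgroup G),
    S.card = n ∧ IsSubgroupCover S ∧ ∀ H ∈ S, IsPowerful p H}

open scoped commutatorElement

lemma isPowerful_of_comm (p : ℕ) (A : Type*) [Group A] (h : ∀ a b : A, a * b = b * a) :
    IsPowerful p A := by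
  rw [IsPowerful, commutator_def, Subgroup.commutator_le]
  intro a _ b _
  rw [commutatorElement_eq_one_iff_mul_comm.2 (h a b)]
  exact Subgroup.one_mem _

lemma isPowerful_of_mulEquiv {p : ℕ} {A B : Type*} [Group A] [Group B] (e : A ≃* B)
    (hA : IsPowerful p A) : IsPowerful p B := by
  obtain ⟨k, hk⟩ : ∃ k, (if p = 2 then 4 else p) = k := ⟨_, rfl⟩
  simp only [IsPowerful, hk] at hA ⊢
  rw [commutator_def, Subgroup.commutator_le]
  intro a _ b _
  have h1 : ⁅e.symm a, e.symm b⁆ ∈ commutator A :=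
    Subgroup.commutator_mem_commutator (Subgroup.mem_top _) (Subgroup.mem_top _)
  have h2 := hA h1
  have hle : Subgroup.closure {x : A | ∃ g : A, x = g ^ k} ≤
      (Subgroup.closure {x : B | ∃ g : B, x = g ^ k}).comap
        e.toMonoidHom := by
    rw [Subgroup.closure_le]
    rintro x ⟨g, rfl⟩
    exact Subgroup.subset_closure ⟨e g, by simp⟩
  have h3 := hle h2
  rw [Subgroup.mem_comap] at h3
  simpa [map_commutatorElement] using h3

lemma isPowerful_prod {p : ℕ} {A B : Type*} [Group A] [Group B]
    (hA : IsPowerful p A) (hB : IsPowerful p B) : IsPowerful p (A × B) := by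
  obtain ⟨k, hk⟩ : ∃ k, (if p = 2 then 4 else p) = k := ⟨_, rfl⟩
  simp only [IsPowerful, hk] at hA hB ⊢
  rw [commutator_def, Subgroup.commutator_le]
  intro x _ y _
  set S : Set (A × B) := {x : A × B | ∃ g : A × B, x = g ^ k} with hS
  have hmemA : ∀ a : A, a ∈ Subgroup.closure {x : A | ∃ g : A, x = g ^ k}
      → ((a, (1 : B)) : A × B) ∈ Subgroup.closure S := by
    intro a ha
    have hle : Subgroup.closure {x : A | ∃ g : A, x = g ^ k} ≤
        (Subgroup.closure S).comap (MonoidHom.inl A B) := by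
      rw [Subgroup.closure_le]
      rintro x ⟨g, rfl⟩
      exact Subgroup.subset_closure ⟨(g, 1), by ext <;> simp⟩
    exact hle ha
  have hmemB : ∀ b : B, b ∈ Subgroup.closure {x : B | ∃ g : B, x = g ^ k}
      → (((1 : A), b) : A × B) ∈ Subgroup.closure S := by
    intro b hb
    have hle : Subgroup.closure {x : B | ∃ g : B, x = g ^ k} ≤
        (Subgroup.closure S).comap (MonoidHom.inr A B) := by
      rw [Subgroup.closure_le]
      rintro x ⟨g, rfl⟩
      exact Subgroup.subset_closure ⟨(1, g), by ext <;> simp⟩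
    exact hle hb
  have hxy : ⁅x, y⁆ = ((⁅x.1, y.1⁆, (1 : B)) : A × B) * ((1 : A), ⁅x.2, y.2⁆) := by
    simp [commutatorElement_def, Prod.ext_iff]
  rw [hxy]
  exact Subgroup.mul_mem _
    (hmemA _ (hA (Subgroup.commutator_mem_commutator (Subgroup.mem_top _) (Subgroup.mem_top _))))
    (hmemB _ (hB (Subgroup.commutator_mem_commutator (Subgroup.mem_top _) (Subgroup.mem_top _))))

lemma coverset_nonempty {p : ℕ} {G : Type*} [Group G] [Finite G] (hGnc : ¬ IsCyclic G) :
    {n : ℕ | ∃ S : Finset (Subgroup G),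
      S.card = n ∧ IsSubgroupCover S ∧ ∀ H ∈ S, IsPowerful p H}.Nonempty := by
  classical
  cases nonempty_fintype G
  refine ⟨_, (Finset.univ : Finset G).image (fun g => Subgroup.zpowers g), rfl, ⟨?_, ?_⟩, ?_⟩
  · intro K hK
    simp only [Finset.mem_image] at hK
    obtain ⟨g, -, rfl⟩ := hK
    intro htop
    refine hGnc ⟨g, fun x => ?_⟩
    have hx : x ∈ (⊤ : Subgroup G) := trivial
    rwa [← htop] at hx
  · intro g
    exact ⟨Subgroup.zpowers g, Finset.mem_image_of_mem _ (Finset.mem_univ g),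
      Subgroup.mem_zpowers g⟩
  · intro K hK
    simp only [Finset.mem_image] at hK
    obtain ⟨g, -, rfl⟩ := hK
    exact isPowerful_of_comm p _ fun a b => (Subgroup.zpowers_isMulCommutative g).is_comm.comm a b

lemma prod_cover_mem {p : ℕ} {G H : Type*} [Group G] [Group H]
    (hHpow : IsPowerful p H) {S : Finset (Subgroup G)}
    (hcov : IsSubgroupCover S) (hpow : ∀ K ∈ S, IsPowerful p K) :
    S.card ∈ {n : ℕ | ∃ T : Finset (Subgroup (G × H)),
      T.card = n ∧ IsSubgroupCover T ∧ ∀ K ∈ T, IsPowerful p K} := by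
  classical
  refine ⟨S.image (fun K => K.prod ⊤), ?_, ⟨?_, ?_⟩, ?_⟩
  · apply Finset.card_image_of_injective
    intro K L hKL
    ext x
    have := Subgroup.ext_iff.1 hKL (x, 1)
    simpa [Subgroup.mem_prod] using this
  · intro K hK
    simp only [Finset.mem_image] at hK
    obtain ⟨L, hL, rfl⟩ := hK
    intro htop
    refine hcov.1 L hL ?_
    ext x
    simp only [Subgroup.mem_top, iff_true]
    have := Subgroup.ext_iff.1 htop (x, 1)
    simpa [Subgroup.mem_prod] using this
  · rintro ⟨g, h⟩
    obtain ⟨K, hK, hg⟩ := hcov.2 g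
    exact ⟨K.prod ⊤, Finset.mem_image_of_mem _ hK, by simp [Subgroup.mem_prod, hg]⟩
  · intro K hK
    simp only [Finset.mem_image] at hK
    obtain ⟨L, hL, rfl⟩ := hK
    have e : ↥(L.prod (⊤ : Subgroup H)) ≃* ↥L × ↥(⊤ : Subgroup H) := Subgroup.prodEquiv L ⊤
    exact isPowerful_of_mulEquiv e.symm
      (isPowerful_prod (hpow L hL) (isPowerful_of_mulEquiv Subgroup.topEquiv.symm hHpow))

lemma cover_mem_of_mulEquiv {p : ℕ} {A B : Type*} [Group A] [Group B] (e : A ≃* B) {n : ℕ}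
    (hn : n ∈ {n : ℕ | ∃ S : Finset (Subgroup A),
      S.card = n ∧ IsSubgroupCover S ∧ ∀ K ∈ S, IsPowerful p K}) :
    n ∈ {n : ℕ | ∃ S : Finset (Subgroup B),
      S.card = n ∧ IsSubgroupCover S ∧ ∀ K ∈ S, IsPowerful p K} := by
  classical
  obtain ⟨S, hcard, hcov, hpow⟩ := hn
  refine ⟨S.image (Subgroup.map e.toMonoidHom), ?_, ⟨?_, ?_⟩, ?_⟩
  · rw [← hcard]
    apply Finset.card_image_of_injective
    intro K L hKL
    have := congrArg (Subgroup.comap (e.toMonoidHom : A →* B)) hKL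
    rwa [Subgroup.comap_map_eq_self_of_injective e.injective,
      Subgroup.comap_map_eq_self_of_injective e.injective] at this
  · intro K hK
    simp only [Finset.mem_image] at hK
    obtain ⟨L, hL, rfl⟩ := hK
    intro htop
    refine hcov.1 L hL ?_
    have := congrArg (Subgroup.comap (e.toMonoidHom : A →* B)) htop
    rwa [Subgroup.comap_map_eq_self_of_injective e.injective, Subgroup.comap_top] at this
  · intro b
    obtain ⟨K, hK, hg⟩ := hcov.2 (e.symm b)
    exact ⟨K.map e.toMonoidHom, Finset.mem_image_of_mem _ hK,
      ⟨e.symm b, hg, by simp⟩⟩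
  · intro K hK
    simp only [Finset.mem_image] at hK
    obtain ⟨L, hL, rfl⟩ := hK
    exact isPowerful_of_mulEquiv (L.equivMapOfInjective e.toMonoidHom e.injective) (hpow L hL)

lemma pcn_prod_le_left {p : ℕ} {G H : Type*} [Group G] [Finite G] [Group H]
    (hGnc : ¬ IsCyclic G) (hHpow : IsPowerful p H) :
    powerfulCoveringNumber p (G × H) ≤ powerfulCoveringNumber p G := by
  have hne := coverset_nonempty (p := p) hGnc
  obtain ⟨S, hcard, hcov, hpow⟩ := Nat.sInf_mem hne
  have h := Nat.sInf_le (prod_cover_mem hHpow hcov hpow)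
  rw [hcard] at h
  exact h

lemma pcn_le_of_mulEquiv {p : ℕ} {A B : Type*} [Group A] [Group B] (e : A ≃* B) :
    powerfulCoveringNumber p B ≤ powerfulCoveringNumber p A := by
  rcases Set.eq_empty_or_nonempty {n : ℕ | ∃ S : Finset (Subgroup A),
      S.card = n ∧ IsSubgroupCover S ∧ ∀ K ∈ S, IsPowerful p K} with hemp | hne
  · have hBemp : {n : ℕ | ∃ S : Finset (Subgroup B),
        S.card = n ∧ IsSubgroupCover S ∧ ∀ K ∈ S, IsPowerful p K} = ∅ := by
      rw [Set.eq_empty_iff_forall_notMem]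
      intro n hn
      exact Set.eq_empty_iff_forall_notMem.1 hemp n (cover_mem_of_mulEquiv e.symm hn)
    rw [powerfulCoveringNumber, powerfulCoveringNumber, hemp, hBemp]
  · obtain ⟨S, hcard, hcov, hpow⟩ := Nat.sInf_mem hne
    have h := Nat.sInf_le (cover_mem_of_mulEquiv e ⟨S, rfl, hcov, hpow⟩)
    rw [hcard] at h
    exact h

/-- If `G` and `H` are finite noncyclic powerful `p`-groups, then
`σ_P(G × H) ≤ min (σ_P(G), σ_P(H))`. -/
theorem powerfulCoveringNumber_prod_le_min
    (p : ℕ) (hp : p.Prime) (G H : Type*) [Group G] [Finite G] [Group H] [Finite H]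
    (hG : IsPGroup p G) (hGnc : ¬ IsCyclic G) (hGpow : IsPowerful p G)
    (hH : IsPGroup p H) (hHnc : ¬ IsCyclic H) (hHpow : IsPowerful p H) :
    powerfulCoveringNumber p (G × H) ≤
      min (powerfulCoveringNumber p G) (powerfulCoveringNumber p H) := by
  refine le_min (pcn_prod_le_left hGnc hHpow) ?_
  calc powerfulCoveringNumber p (G × H) ≤ powerfulCoveringNumber p (H × G) :=
        pcn_le_of_mulEquiv (MulEquiv.prodComm : (H × G) ≃* (G × H))
    _ ≤ powerfulCoveringNumber p H := pcn_prod_le_left hHnc hGpow
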